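/- Let γ > 0. With S(0,y) = ∫_0^y e^{-1/z}·z/(1−z) dz and K(z) = (1/γ)·e^{1/z}·(2 − 2/z + 1/z²), the mean excitation time T̄(y) = S(0,y)·(K(y) − K(1)) = S(0,y)·(K(y) − e/γ) satisfies T̄(y) → 0 as y → 0⁺ and T̄(y) → 0 as y → 1⁻; moreover T̄(y) > 0 for all y ∈ (0,1). -/

import Mathlib

/-- Heterodyne scale density Q(z) = e^{-1/z}·z/(1−z). -/
noncomputable def Qhet (z : ℝ) : ℝ := Real.exp (-1 / z) * z / (1 - z)

/-- Heterodyne scale integral S(0,y) = ∫_0^y Q(z) dz. -/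
noncomputable def Shet0 (y : ℝ) : ℝ := ∫ z in (0 : ℝ)..y, Qhet z

/-- Heterodyne function K(z) = (1/γ)e^{1/z}(2 − 2/z + 1/z²). -/
noncomputable def Khet (γ z : ℝ) : ℝ :=
  (1 / γ) * Real.exp (1 / z) * (2 - 2 / z + 1 / z ^ 2)

open Real MeasureTheory intervalIntegral Set Filter

lemma khet_hasDerivAt (γ : ℝ) {z : ℝ} (hγ : γ ≠ 0) (hz : z ≠ 0) :
    HasDerivAt (Khet γ) (-(Real.exp (1 / z) / (γ * z ^ 4))) z := by
  have h1 : HasDerivAt (fun z : ℝ => 1 / z) (-(1 / z ^ 2)) z := by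
    simpa [one_div] using hasDerivAt_inv hz
  have hexp : HasDerivAt (fun z : ℝ => Real.exp (1 / z))
      (Real.exp (1 / z) * (-(1 / z ^ 2))) z := h1.exp
  have hq : HasDerivAt (fun z : ℝ => 1 / z ^ 2)
      ((0 * z ^ 2 - 1 * (2 * z ^ 1)) / (z ^ 2) ^ 2) z :=
    (hasDerivAt_const z 1).div (hasDerivAt_pow 2 z) (pow_ne_zero 2 hz)
  have hpoly : HasDerivAt (fun z : ℝ => 2 - 2 / z + 1 / z ^ 2)
      (-(2 * (-(1 / z ^ 2))) + (0 * z ^ 2 - 1 * (2 * z ^ 1)) / (z ^ 2) ^ 2) z := by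
    have h2z : HasDerivAt (fun z : ℝ => 2 / z) (2 * (-(1 / z ^ 2))) z := by
      simpa [div_eq_mul_inv] using h1.const_mul 2
    have h2 : HasDerivAt (fun z : ℝ => 2 - 2 / z) (0 - 2 * (-(1 / z ^ 2))) z :=
      (hasDerivAt_const z 2).sub h2z
    have := h2.add hq
    refine this.congr_deriv ?_
    ring
  have := (hexp.const_mul (1 / γ)).mul hpoly
  have heq : Khet γ = fun z : ℝ => (1 / γ) * Real.exp (1 / z) * (2 - 2 / z + 1 / z ^ 2) := rfl
  rw [heq]
  refine this.congr_deriv ?_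
  field_simp
  ring

lemma khet_one (γ : ℝ) : Khet γ 1 = Real.exp 1 / γ := by
  norm_num [Khet]; ring

lemma khet_cont (γ : ℝ) (hγ : γ ≠ 0) {y : ℝ} (hy0 : 0 < y) :
    ContinuousOn (fun z : ℝ => Real.exp (1 / z) / (γ * z ^ 4)) (Set.uIcc y 1) := by
  have hne : ∀ z ∈ Set.uIcc y 1, z ≠ 0 := by
    intro z hz
    rcases Set.mem_uIcc.1 hz with h | h
    · exact (lt_of_lt_of_le hy0 h.1).ne'
    · exact (lt_of_lt_of_le one_pos h.1).ne'
  apply ContinuousOn.div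
  · exact Real.continuous_exp.comp_continuousOn (continuousOn_const.div continuousOn_id hne)
  · exact continuousOn_const.mul (continuousOn_pow 4)
  · intro z hz; exact mul_ne_zero hγ (pow_ne_zero 4 (hne z hz))

lemma khet_sub_eq (γ : ℝ) (hγ : γ ≠ 0) {y : ℝ} (hy0 : 0 < y) (hy1 : y ≤ 1) :
    Khet γ y - Real.exp 1 / γ = ∫ z in y..1, Real.exp (1 / z) / (γ * z ^ 4) := by
  have hderiv : ∀ z ∈ Set.uIcc y 1,
      HasDerivAt (Khet γ) (-(Real.exp (1 / z) / (γ * z ^ 4))) z := by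
    intro z hz
    rw [Set.uIcc_of_le hy1] at hz
    exact khet_hasDerivAt γ hγ (lt_of_lt_of_le hy0 hz.1).ne'
  have hint : IntervalIntegrable (fun z => -(Real.exp (1 / z) / (γ * z ^ 4))) volume y 1 :=
    ((khet_cont γ hγ hy0).neg).intervalIntegrable
  have key := intervalIntegral.integral_eq_sub_of_hasDerivAt hderiv hint
  rw [intervalIntegral.integral_neg] at key
  rw [khet_one] at key
  linarith

lemma khet_sub_pos (γ : ℝ) (hγ : 0 < γ) {y : ℝ} (hy0 : 0 < y) (hy1 : y < 1) :
    0 < Khet γ y - Real.exp 1 / γ := by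
  rw [khet_sub_eq γ hγ.ne' hy0 hy1.le]
  apply intervalIntegral.intervalIntegral_pos_of_pos_on
  · exact (khet_cont γ hγ.ne' hy0).intervalIntegrable
  · intro z hz
    exact div_pos (Real.exp_pos _) (mul_pos hγ (pow_pos (lt_trans hy0 hz.1) 4))
  · exact hy1

lemma khet_sub_le (γ : ℝ) (hγ : 0 < γ) {y : ℝ} (hy0 : 0 < y) (hy1 : y < 1) :
    Khet γ y - Real.exp 1 / γ ≤ (1 - y) * (Real.exp (1 / y) / (γ * y ^ 4)) := by
  rw [khet_sub_eq γ hγ.ne' hy0 hy1.le]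
  have hmono := intervalIntegral.integral_mono_on (μ := volume) hy1.le
    ((khet_cont γ hγ.ne' hy0).intervalIntegrable) (_root_.intervalIntegrable_const
      (c := Real.exp (1 / y) / (γ * y ^ 4))) ?_
  · rw [intervalIntegral.integral_const] at hmono
    simpa [smul_eq_mul, mul_div_assoc] using hmono
  · intro z hz
    have hz0 : 0 < z := lt_of_lt_of_le hy0 hz.1
    apply div_le_div₀ (Real.exp_pos _).le
    · exact Real.exp_le_exp.2 (by
        apply one_div_le_one_div_of_le hy0 hz.1)
    · exact mul_pos hγ (pow_pos hy0 4)
    · exact mul_le_mul_of_nonneg_left (pow_le_pow_left₀ hy0.le hz.1 4) hγ.le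

lemma khet_sub_le' (γ : ℝ) (hγ : 0 < γ) {y : ℝ} (hy0 : 0 < y) (hy1 : y < 1) :
    Khet γ y - Real.exp 1 / γ ≤ (1 / γ) * Real.exp (1 / y) * (1 / y ^ 2 + 1) := by
  have h1 : Khet γ y - Real.exp 1 / γ ≤ Khet γ y := by
    have : 0 < Real.exp 1 / γ := div_pos (Real.exp_pos _) hγ
    linarith
  refine h1.trans ?_
  unfold Khet
  have h2 : 2 - 2 / y + 1 / y ^ 2 ≤ 1 / y ^ 2 + 1 := by
    have h1y : 1 ≤ 1 / y := (le_div_iff₀ hy0).2 (by linarith)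
    have h2y : 2 / y = 2 * (1 / y) := by ring
    linarith
  have h3 : 0 ≤ (1 / γ) * Real.exp (1 / y) :=
    mul_nonneg (by positivity) (Real.exp_pos _).le
  nlinarith [Real.exp_pos (1 / y)]

lemma qhet_measurable : Measurable Qhet := by
  unfold Qhet
  exact ((Real.measurable_exp.comp (measurable_const.div measurable_id)).mul
    measurable_id).div (measurable_const.sub measurable_id)

lemma qhet_nonneg {z : ℝ} (h0 : 0 ≤ z) (h1 : z < 1) : 0 ≤ Qhet z := by
  unfold Qhet
  have := Real.exp_pos (-1 / z)
  have h1z : 0 < 1 - z := by linarith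
  positivity

lemma qhet_le_frac {z : ℝ} (h0 : 0 ≤ z) (h1 : z < 1) : Qhet z ≤ z / (1 - z) := by
  unfold Qhet
  have h1z : 0 < 1 - z := by linarith
  have hexp : Real.exp (-1 / z) ≤ 1 := by
    apply Real.exp_le_one_iff.2
    apply div_nonpos_of_nonpos_of_nonneg <;> linarith
  rw [div_le_div_iff₀ h1z h1z]
  nlinarith [mul_le_mul_of_nonneg_right (mul_le_mul_of_nonneg_right hexp h0) h1z.le]

lemma qhet_intervalIntegrable {y : ℝ} (h0 : 0 < y) (h1 : y < 1) :
    IntervalIntegrable Qhet volume 0 y := by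
  rw [intervalIntegrable_iff_integrableOn_Ioc_of_le h0.le]
  apply Integrable.mono' (g := fun _ => y / (1 - y))
    (integrableOn_const measure_Ioc_lt_top.ne)
    (qhet_measurable.aestronglyMeasurable.restrict)
  rw [ae_restrict_iff' measurableSet_Ioc]
  filter_upwards with z hz
  have hz1 : z < 1 := lt_of_le_of_lt hz.2 h1
  rw [Real.norm_eq_abs, abs_of_nonneg (qhet_nonneg hz.1.le hz1)]
  calc Qhet z ≤ z / (1 - z) := qhet_le_frac hz.1.le hz1
    _ ≤ y / (1 - y) := by
        apply div_le_div₀ (by linarith) hz.2 (by linarith) (by linarith [hz.2])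

lemma shet_pos {y : ℝ} (h0 : 0 < y) (h1 : y < 1) : 0 < Shet0 y := by
  apply intervalIntegral.intervalIntegral_pos_of_pos_on
    (qhet_intervalIntegrable h0 h1) _ h0
  intro z hz
  have hz1 : z < 1 := lt_trans hz.2 h1
  unfold Qhet
  have h1z : 0 < 1 - z := by linarith
  have := hz.1
  positivity

lemma integral_frac {y : ℝ} (h0 : 0 < y) (h1 : y < 1) :
    ∫ z in (0:ℝ)..y, z / (1 - z) = -y - Real.log (1 - y) := by
  have hderiv : ∀ z ∈ Set.uIcc (0:ℝ) y,
      HasDerivAt (fun z : ℝ => -z - Real.log (1 - z)) (z / (1 - z)) z := by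
    intro z hz
    rw [Set.uIcc_of_le h0.le] at hz
    have h1z : (1 : ℝ) - z ≠ 0 := by
      have : z < 1 := lt_of_le_of_lt hz.2 h1
      intro h; simp only [id_eq, sub_eq_zero] at h; linarith
    have hlog : HasDerivAt (fun z : ℝ => Real.log (1 - z)) ((1 - z)⁻¹ * (0 - 1)) z :=
      (Real.hasDerivAt_log h1z).comp z ((hasDerivAt_const z 1).sub (hasDerivAt_id z))
    have := ((hasDerivAt_id z).neg).sub hlog
    refine this.congr_deriv ?_
    field_simp
    ring
  have hcont : IntervalIntegrable (fun z : ℝ => z / (1 - z)) volume 0 y := by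
    apply ContinuousOn.intervalIntegrable
    apply ContinuousOn.div continuousOn_id ((continuous_const.sub continuous_id).continuousOn)
    intro z hz
    rw [Set.uIcc_of_le h0.le] at hz
    have : z < 1 := lt_of_le_of_lt hz.2 h1
    intro h; have h' : (1:ℝ) - z = 0 := h; linarith
  rw [intervalIntegral.integral_eq_sub_of_hasDerivAt hderiv hcont]
  simp

lemma shet_le_log {y : ℝ} (h0 : 0 < y) (h1 : y < 1) :
    Shet0 y ≤ -y - Real.log (1 - y) := by
  rw [← integral_frac h0 h1]
  apply intervalIntegral.integral_mono_on h0.le (qhet_intervalIntegrable h0 h1)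
  · apply ContinuousOn.intervalIntegrable
    apply ContinuousOn.div continuousOn_id ((continuous_const.sub continuous_id).continuousOn)
    intro z hz
    rw [Set.uIcc_of_le h0.le] at hz
    have : z < 1 := lt_of_le_of_lt hz.2 h1
    intro h; have h' : (1:ℝ) - z = 0 := h; linarith
  · intro z hz
    exact qhet_le_frac hz.1 (lt_of_le_of_lt hz.2 h1)

lemma integral_exp_aux {y : ℝ} (h0 : 0 < y) :
    ∫ z in (0:ℝ)..y, Real.exp ((z - y) / y ^ 2)
      = y ^ 2 * (1 - Real.exp (-y / y ^ 2)) := by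
  have hderiv : ∀ z ∈ Set.uIcc (0:ℝ) y,
      HasDerivAt (fun z : ℝ => y ^ 2 * Real.exp ((z - y) / y ^ 2))
        (Real.exp ((z - y) / y ^ 2)) z := by
    intro z _
    have h := ((((hasDerivAt_id z).sub_const y).div_const (y ^ 2)).exp).const_mul (y ^ 2)
    refine h.congr_deriv ?_
    field_simp
    rfl
  have hcont : IntervalIntegrable (fun z : ℝ => Real.exp ((z - y) / y ^ 2)) volume 0 y :=
    (Real.continuous_exp.comp ((continuous_id.sub continuous_const).div_const _)).intervalIntegrable 0 y
  rw [intervalIntegral.integral_eq_sub_of_hasDerivAt hderiv hcont]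
  rw [show ((y : ℝ) - y) / y ^ 2 = 0 by simp]
  rw [show ((0 : ℝ) - y) / y ^ 2 = -y / y ^ 2 by ring]
  simp
  ring

lemma shet_le_exp {y : ℝ} (h0 : 0 < y) (h1 : y < 1) :
    Shet0 y ≤ y ^ 3 * Real.exp (-1 / y) / (1 - y) := by
  have hbd : ∀ z ∈ Set.Icc (0:ℝ) y,
      Qhet z ≤ (y / (1 - y)) * Real.exp (-1 / y) * Real.exp ((z - y) / y ^ 2) := by
    intro z hz
    rcases eq_or_lt_of_le hz.1 with rfl | hz0
    · have : Qhet 0 = 0 := by simp [Qhet]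
      rw [this]
      have h1y : 0 < 1 - y := by linarith
      positivity
    · have hz1 : z < 1 := lt_of_le_of_lt hz.2 h1
      have h1z : 0 < 1 - z := by linarith
      have h1y : 0 < 1 - y := by linarith
      have hexp : Real.exp (-1 / z) ≤ Real.exp (-1 / y) * Real.exp ((z - y) / y ^ 2) := by
        rw [← Real.exp_add]
        apply Real.exp_le_exp.2
        rw [div_le_iff₀ hz0] at *
        have key : (-1 / y + (z - y) / y ^ 2) * z - (-1) = (y - z) ^ 2 * z / (z * y ^ 2) := by
          field_simp
          ring
        nlinarith [sq_nonneg (y - z), mul_pos hz0 (pow_pos h0 2),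
          div_nonneg (mul_nonneg (sq_nonneg (y - z)) hz0.le) (mul_pos hz0 (pow_pos h0 2)).le]
      have hfrac : z / (1 - z) ≤ y / (1 - y) :=
        div_le_div₀ h0.le hz.2 h1y (by linarith [hz.2])
      calc Qhet z = Real.exp (-1 / z) * (z / (1 - z)) := by unfold Qhet; ring
        _ ≤ (Real.exp (-1 / y) * Real.exp ((z - y) / y ^ 2)) * (y / (1 - y)) := by
            apply mul_le_mul hexp hfrac (by positivity) (by positivity)
        _ = (y / (1 - y)) * Real.exp (-1 / y) * Real.exp ((z - y) / y ^ 2) := by ring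
  have hint : IntervalIntegrable
      (fun z : ℝ => (y / (1 - y)) * Real.exp (-1 / y) * Real.exp ((z - y) / y ^ 2)) volume 0 y := by
    apply Continuous.intervalIntegrable
    exact (continuous_const.mul
      (Real.continuous_exp.comp ((continuous_id.sub continuous_const).div_const _)))
  have hmono := intervalIntegral.integral_mono_on h0.le
    (qhet_intervalIntegrable h0 h1) hint hbd
  have : (∫ z in (0:ℝ)..y, (y / (1 - y)) * Real.exp (-1 / y) * Real.exp ((z - y) / y ^ 2))
      = (y / (1 - y)) * Real.exp (-1 / y) * (y ^ 2 * (1 - Real.exp (-y / y ^ 2))) := by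
    rw [intervalIntegral.integral_const_mul, integral_exp_aux h0]
  rw [this] at hmono
  refine le_trans hmono ?_
  have h1y : 0 < 1 - y := by linarith
  have hE : 0 < Real.exp (-y / y ^ 2) := Real.exp_pos _
  have hE1 : Real.exp (-y / y ^ 2) ≤ 1 := by
    apply Real.exp_le_one_iff.2
    rw [neg_div]
    exact neg_nonpos.2 (by positivity)
  have heq : y ^ 3 * Real.exp (-1 / y) / (1 - y)
      = y / (1 - y) * Real.exp (-1 / y) * (y ^ 2 * 1) := by
    field_simp
  rw [heq]
  apply mul_le_mul_of_nonneg_left _ (by positivity)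
  exact mul_le_mul_of_nonneg_left (by linarith) (sq_nonneg y)

/-- The mean excitation time T̄(y) = S(0,y)·(K(y) − K(1)) = S(0,y)·(K(y) − e/γ)
under heterodyne detection tends to 0 as y → 0⁺ and as y → 1⁻, and is
strictly positive on (0,1). -/
theorem het_mean_excitation_time (γ : ℝ) (hγ : 0 < γ) :
    let T : ℝ → ℝ := fun y => Shet0 y * (Khet γ y - Real.exp 1 / γ)
    Filter.Tendsto T (nhdsWithin 0 (Set.Ioi 0)) (nhds 0) ∧
    Filter.Tendsto T (nhdsWithin 1 (Set.Iio 1)) (nhds 0) ∧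
    ∀ y ∈ Set.Ioo (0 : ℝ) 1, 0 < T y := by
  intro T
  have hT0 : ∀ y ∈ Set.Ioo (0 : ℝ) 1, 0 < T y := fun y hy =>
    mul_pos (shet_pos hy.1 hy.2) (khet_sub_pos γ hγ hy.1 hy.2)
  refine ⟨?_, ?_, hT0⟩
  · -- limit at 0⁺
    have hmem : Set.Ioo (0:ℝ) 1 ∈ nhdsWithin (0:ℝ) (Set.Ioi 0) :=
      Ioo_mem_nhdsGT_of_mem ⟨le_refl 0, one_pos⟩
    apply squeeze_zero' (g := fun y => (y + y ^ 3) / (γ * (1 - y)))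
    · filter_upwards [hmem] with y hy; exact (hT0 y hy).le
    · filter_upwards [hmem] with y hy
      have hE : Real.exp (-1 / y) * Real.exp (1 / y) = 1 := by
        rw [← Real.exp_add, show -1 / y + 1 / y = 0 by ring, Real.exp_zero]
      have hkey : y ^ 3 * Real.exp (-1 / y) / (1 - y) * ((1 / γ) * Real.exp (1 / y) * (1 / y ^ 2 + 1))
          = (y + y ^ 3) / (γ * (1 - y)) := by
        have h1y : (1:ℝ) - y ≠ 0 := by intro h; simp only [sub_eq_zero] at h; linarith [hy.2]
        calc y ^ 3 * Real.exp (-1 / y) / (1 - y) * ((1 / γ) * Real.exp (1 / y) * (1 / y ^ 2 + 1))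
            = (Real.exp (-1 / y) * Real.exp (1 / y)) * (y ^ 3 / (1 - y) * ((1 / γ) * (1 / y ^ 2 + 1))) := by
              ring
          _ = y ^ 3 / (1 - y) * ((1 / γ) * (1 / y ^ 2 + 1)) := by rw [hE, one_mul]
          _ = (y + y ^ 3) / (γ * (1 - y)) := by
              field_simp [hy.1.ne']
      calc T y ≤ (y ^ 3 * Real.exp (-1 / y) / (1 - y)) * ((1 / γ) * Real.exp (1 / y) * (1 / y ^ 2 + 1)) := by
            apply mul_le_mul (shet_le_exp hy.1 hy.2) (khet_sub_le' γ hγ hy.1 hy.2)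
              (khet_sub_pos γ hγ hy.1 hy.2).le
            have h1y : 0 < 1 - y := by linarith [hy.2]
            have hy0 : 0 < y := hy.1
            positivity
        _ = (y + y ^ 3) / (γ * (1 - y)) := hkey
    · have hc : ContinuousAt (fun y : ℝ => (y + y ^ 3) / (γ * (1 - y))) 0 := by
        apply ContinuousAt.div
        · fun_prop
        · fun_prop
        · simp [hγ.ne']
      have := hc.tendsto.mono_left (nhdsWithin_le_nhds (s := Set.Ioi 0))
      simpa using this
  · -- limit at 1⁻
    have hmem : Set.Ioo (0:ℝ) 1 ∈ nhdsWithin (1:ℝ) (Set.Iio 1) :=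
      Ioo_mem_nhdsLT_of_mem ⟨zero_lt_one, le_refl 1⟩
    apply squeeze_zero'
      (g := fun y => ((-y - Real.log (1 - y)) * (1 - y)) * (Real.exp (1 / y) / (γ * y ^ 4)))
    · filter_upwards [hmem] with y hy; exact (hT0 y hy).le
    · filter_upwards [hmem] with y hy
      have h1y : 0 < 1 - y := by linarith [hy.2]
      have hSnn : 0 ≤ -y - Real.log (1 - y) := by
        have := Real.log_le_sub_one_of_pos h1y
        linarith
      calc T y ≤ (-y - Real.log (1 - y)) * ((1 - y) * (Real.exp (1 / y) / (γ * y ^ 4))) := by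
            apply mul_le_mul (shet_le_log hy.1 hy.2) (khet_sub_le γ hγ hy.1 hy.2)
              (khet_sub_pos γ hγ hy.1 hy.2).le hSnn
        _ = ((-y - Real.log (1 - y)) * (1 - y)) * (Real.exp (1 / y) / (γ * y ^ 4)) := by ring
    · have hsub : Filter.Tendsto (fun y : ℝ => 1 - y) (nhdsWithin 1 (Set.Iio 1))
          (nhdsWithin 0 (Set.Ioi 0)) := by
        rw [tendsto_nhdsWithin_iff]
        constructor
        · have : Filter.Tendsto (fun y : ℝ => 1 - y) (nhds 1) (nhds (1 - 1)) :=
            (continuous_const.sub continuous_id).tendsto 1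
          simpa using this.mono_left nhdsWithin_le_nhds
        · filter_upwards [self_mem_nhdsWithin] with y hy
          simp only [Set.mem_Iio] at hy
          exact Set.mem_Ioi.2 (by linarith)
      have hlog : Filter.Tendsto (fun t : ℝ => Real.log t * t) (nhdsWithin 0 (Set.Ioi 0)) (nhds 0) := by
        have := tendsto_log_mul_rpow_nhdsGT_zero one_pos
        apply this.congr'
        filter_upwards [self_mem_nhdsWithin] with t ht
        rw [Real.rpow_one]
      have h2 : Filter.Tendsto (fun y : ℝ => Real.log (1 - y) * (1 - y))
          (nhdsWithin 1 (Set.Iio 1)) (nhds 0) := hlog.comp hsub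
      have h3 : Filter.Tendsto (fun y : ℝ => (-y) * (1 - y)) (nhdsWithin 1 (Set.Iio 1)) (nhds 0) := by
        have hc : ContinuousAt (fun y : ℝ => (-y) * (1 - y)) 1 := by fun_prop
        have := hc.tendsto.mono_left (nhdsWithin_le_nhds (s := Set.Iio 1))
        simpa using this
      have hA : Filter.Tendsto (fun y : ℝ => (-y - Real.log (1 - y)) * (1 - y))
          (nhdsWithin 1 (Set.Iio 1)) (nhds 0) := by
        have := h3.sub h2
        simp only [sub_zero] at this
        apply this.congr
        intro y; ring
      have hB : Filter.Tendsto (fun y : ℝ => Real.exp (1 / y) / (γ * y ^ 4))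
          (nhdsWithin 1 (Set.Iio 1)) (nhds (Real.exp 1 / γ)) := by
        have hc : ContinuousAt (fun y : ℝ => Real.exp (1 / y) / (γ * y ^ 4)) 1 := by
          apply ContinuousAt.div
          · apply Real.continuous_exp.continuousAt.comp
            apply ContinuousAt.div continuousAt_const continuousAt_id one_ne_zero
          · fun_prop
          · simp [hγ.ne']
        have := hc.tendsto.mono_left (nhdsWithin_le_nhds (s := Set.Iio 1))
        simpa using this
      have := hA.mul hB
      simpa using this
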